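/- If for two discrete distributions P and Q over sequences of length K, the per-step conditional likelihood-ratio moments satisfy E_{y_n ∼ Q(·|y^{(n−1)})}[(P(y_n|y^{(n−1)})/Q(y_n|y^{(n−1)}))^α] ≤ e^{(α−1)ε_n(y^{(n−1)})} for adaptively chosen ε_n with Σ_{n=1}^K ε_n ≤ ε_max almost surely, then E_{y^{(K)}∼Q}[(P(y^{(K)})/Q(y^{(K)}))^α] ≤ e^{(α−1)ε_max}. -/
import Mathlib

open Finset

/-- The length-`n` prefix of a sequence `y : Fin K → Y`, for `n : Fin K`. -/
def prefixOf {K : ℕ} {Y : Type*} (y : Fin K → Y) (n : Fin K) : Fin n → Y :=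
  fun i => y (Fin.castLE n.isLt.le i)

lemma prefixOf_snoc_castSucc {K : ℕ} {Y : Type*} (y : Fin K → Y) (z : Y) (m : Fin K) :
    prefixOf (Fin.snoc y z) m.castSucc = prefixOf y m := by
  funext i
  show (Fin.snoc y z : Fin (K+1) → Y) (Fin.castLE _ i) = y (Fin.castLE _ i)
  have h : Fin.castLE (m.castSucc).isLt.le i = Fin.castSucc (Fin.castLE m.isLt.le i) := rfl
  rw [h, Fin.snoc_castSucc]

lemma prefixOf_snoc_last {K : ℕ} {Y : Type*} (y : Fin K → Y) (z : Y) :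
    prefixOf (Fin.snoc y z) (Fin.last K) = y := by
  funext i
  show (Fin.snoc y z : Fin (K+1) → Y) (Fin.castLE _ i) = y i
  have h : Fin.castLE (Fin.last K).isLt.le i = Fin.castSucc i := rfl
  rw [h, Fin.snoc_castSucc]

/-- snoc equivalence -/
def snocEquiv (K : ℕ) (Y : Type*) : (Fin K → Y) × Y ≃ (Fin (K+1) → Y) where
  toFun p := Fin.snoc p.1 p.2
  invFun y := (Fin.init y, y (Fin.last K))
  left_inv p := by simp
  right_inv y := by simp

lemma aux {Y : Type*} [Fintype Y] (α : ℝ) (hα : 1 < α) :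
    ∀ (K : ℕ) (p q : (n : Fin K) → (Fin n → Y) → Y → ℝ),
      (∀ n hist y, 0 ≤ p n hist y) → (∀ n hist y, 0 ≤ q n hist y) →
      ∀ (ε : (n : Fin K) → (Fin n → Y) → ℝ),
      (∀ n hist, ∑ y, q n hist y * (p n hist y / q n hist y) ^ α ≤
          Real.exp ((α - 1) * ε n hist)) →
      ∑ y : Fin K → Y,
          (∏ n, q n (prefixOf y n) (y n)) *
            (((∏ n, p n (prefixOf y n) (y n)) / ∏ n, q n (prefixOf y n) (y n)) ^ α *
              Real.exp (-((α - 1) * ∑ n, ε n (prefixOf y n)))) ≤ 1 := by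
  intro K
  induction K with
  | zero =>
    intro p q hp hq ε hm
    simp
  | succ K ih =>
    intro p q hp hq ε hm
    -- reindex the sum via snoc
    rw [← Equiv.sum_comp (snocEquiv K Y)]
    rw [Fintype.sum_prod_type]
    set p' : (n : Fin K) → (Fin n → Y) → Y → ℝ := fun n => p n.castSucc with hp'
    set q' : (n : Fin K) → (Fin n → Y) → Y → ℝ := fun n => q n.castSucc with hq'
    set ε' : (n : Fin K) → (Fin n → Y) → ℝ := fun n => ε n.castSucc with hε'
    have key : ∀ y' : Fin K → Y,
        ∑ z : Y, ((∏ n, q n (prefixOf (snocEquiv K Y (y', z)) n) ((snocEquiv K Y (y', z)) n)) *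
          (((∏ n, p n (prefixOf (snocEquiv K Y (y', z)) n) ((snocEquiv K Y (y', z)) n)) /
            ∏ n, q n (prefixOf (snocEquiv K Y (y', z)) n) ((snocEquiv K Y (y', z)) n)) ^ α *
            Real.exp (-((α - 1) * ∑ n, ε n (prefixOf (snocEquiv K Y (y', z)) n)))))
        ≤ (∏ n, q' n (prefixOf y' n) (y' n)) *
            (((∏ n, p' n (prefixOf y' n) (y' n)) / ∏ n, q' n (prefixOf y' n) (y' n)) ^ α *
              Real.exp (-((α - 1) * ∑ n, ε' n (prefixOf y' n)))) := by
      intro y'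
      have hQ : 0 ≤ ∏ n, q' n (prefixOf y' n) (y' n) :=
        Finset.prod_nonneg fun n _ => hq _ _ _
      have hP : 0 ≤ ∏ n, p' n (prefixOf y' n) (y' n) :=
        Finset.prod_nonneg fun n _ => hp _ _ _
      have hterm : ∀ z : Y,
          (∏ n, q n (prefixOf (snocEquiv K Y (y', z)) n) ((snocEquiv K Y (y', z)) n)) *
          (((∏ n, p n (prefixOf (snocEquiv K Y (y', z)) n) ((snocEquiv K Y (y', z)) n)) /
            ∏ n, q n (prefixOf (snocEquiv K Y (y', z)) n) ((snocEquiv K Y (y', z)) n)) ^ α *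
            Real.exp (-((α - 1) * ∑ n, ε n (prefixOf (snocEquiv K Y (y', z)) n))))
          = ((∏ n, q' n (prefixOf y' n) (y' n)) *
              (((∏ n, p' n (prefixOf y' n) (y' n)) / ∏ n, q' n (prefixOf y' n) (y' n)) ^ α *
                Real.exp (-((α - 1) * ∑ n, ε' n (prefixOf y' n))))) *
            (q (Fin.last K) y' z *
              ((p (Fin.last K) y' z / q (Fin.last K) y' z) ^ α *
                Real.exp (-((α - 1) * ε (Fin.last K) y')))) := by
        intro z
        have hy : (snocEquiv K Y (y', z)) = Fin.snoc y' z := rfl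
        rw [hy]
        rw [Fin.prod_univ_castSucc (fun n => q n (prefixOf (Fin.snoc y' z) n) ((Fin.snoc y' z : Fin (K+1) → Y) n)),
            Fin.prod_univ_castSucc (fun n => p n (prefixOf (Fin.snoc y' z) n) ((Fin.snoc y' z : Fin (K+1) → Y) n)),
            Fin.sum_univ_castSucc (fun n => ε n (prefixOf (Fin.snoc y' z) n))]
        simp only [prefixOf_snoc_castSucc, prefixOf_snoc_last, Fin.snoc_castSucc, Fin.snoc_last]
        have hcongP : ∀ n : Fin K, p n.castSucc (prefixOf y' n) (y' n) = p' n (prefixOf y' n) (y' n) := fun n => rfl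
        rw [← div_mul_div_comm,
            Real.mul_rpow (div_nonneg hP hQ) (div_nonneg (hp _ _ _) (hq _ _ _)),
            mul_add, neg_add, Real.exp_add]
        ring
      calc ∑ z : Y, _ = _ := Finset.sum_congr rfl fun z _ => hterm z
        _ ≤ _ := by
          rw [← Finset.mul_sum]
          have hsum : ∑ z : Y, q (Fin.last K) y' z *
              ((p (Fin.last K) y' z / q (Fin.last K) y' z) ^ α *
                Real.exp (-((α - 1) * ε (Fin.last K) y'))) ≤ 1 := by
            have := hm (Fin.last K) y'
            calc ∑ z : Y, q (Fin.last K) y' z *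
                ((p (Fin.last K) y' z / q (Fin.last K) y' z) ^ α *
                  Real.exp (-((α - 1) * ε (Fin.last K) y')))
                = (∑ z : Y, q (Fin.last K) y' z *
                    (p (Fin.last K) y' z / q (Fin.last K) y' z) ^ α) *
                  Real.exp (-((α - 1) * ε (Fin.last K) y')) := by
                  rw [Finset.sum_mul]; exact Finset.sum_congr rfl fun z _ => by ring
              _ ≤ Real.exp ((α - 1) * ε (Fin.last K) y') *
                  Real.exp (-((α - 1) * ε (Fin.last K) y')) := by
                  apply mul_le_mul_of_nonneg_right this (Real.exp_nonneg _)
              _ = 1 := by rw [← Real.exp_add]; simp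
          have h0 : 0 ≤ (∏ n, q' n (prefixOf y' n) (y' n)) *
              (((∏ n, p' n (prefixOf y' n) (y' n)) / ∏ n, q' n (prefixOf y' n) (y' n)) ^ α *
                Real.exp (-((α - 1) * ∑ n, ε' n (prefixOf y' n)))) :=
            mul_nonneg hQ (mul_nonneg (Real.rpow_nonneg (div_nonneg hP hQ) _) (Real.exp_nonneg _))
          calc _ ≤ _ * 1 := mul_le_mul_of_nonneg_left hsum h0
            _ = _ := mul_one _
    calc ∑ y' : Fin K → Y, ∑ z : Y, _ ≤
        ∑ y' : Fin K → Y, (∏ n, q' n (prefixOf y' n) (y' n)) *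
            (((∏ n, p' n (prefixOf y' n) (y' n)) / ∏ n, q' n (prefixOf y' n) (y' n)) ^ α *
              Real.exp (-((α - 1) * ∑ n, ε' n (prefixOf y' n)))) :=
          Finset.sum_le_sum fun y' _ => key y'
      _ ≤ 1 := ih p' q' (fun n h y => hp _ _ _) (fun n h y => hq _ _ _) ε'
          (fun n h => hm n.castSucc h)

theorem adaptive_moment_bound {K : ℕ} {Y : Type*} [Fintype Y] [Nonempty Y]
    (p q : (n : Fin K) → (Fin n → Y) → Y → ℝ)
    (hp_nonneg : ∀ n hist y, 0 ≤ p n hist y) (hq_nonneg : ∀ n hist y, 0 ≤ q n hist y)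
    (hp_sum : ∀ n hist, ∑ y, p n hist y = 1) (hq_sum : ∀ n hist, ∑ y, q n hist y = 1)
    (α : ℝ) (hα : 1 < α)
    (ε : (n : Fin K) → (Fin n → Y) → ℝ) (εmax : ℝ)
    (hmoment : ∀ n hist,
      ∑ y, q n hist y * (p n hist y / q n hist y) ^ α ≤
        Real.exp ((α - 1) * ε n hist))
    (hbudget : ∀ y : Fin K → Y, ∑ n, ε n (prefixOf y n) ≤ εmax) :
    ∑ y : Fin K → Y,
        (∏ n, q n (prefixOf y n) (y n)) *
          ((∏ n, p n (prefixOf y n) (y n)) / ∏ n, q n (prefixOf y n) (y n)) ^ α ≤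
      Real.exp ((α - 1) * εmax) := by
  have h1 := aux α hα K p q hp_nonneg hq_nonneg ε hmoment
  calc ∑ y : Fin K → Y,
        (∏ n, q n (prefixOf y n) (y n)) *
          ((∏ n, p n (prefixOf y n) (y n)) / ∏ n, q n (prefixOf y n) (y n)) ^ α
      ≤ ∑ y : Fin K → Y,
        ((∏ n, q n (prefixOf y n) (y n)) *
          (((∏ n, p n (prefixOf y n) (y n)) / ∏ n, q n (prefixOf y n) (y n)) ^ α *
            Real.exp (-((α - 1) * ∑ n, ε n (prefixOf y n))))) * Real.exp ((α - 1) * εmax) := by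
        apply Finset.sum_le_sum
        intro y _
        have hQ : 0 ≤ ∏ n, q n (prefixOf y n) (y n) :=
          Finset.prod_nonneg fun n _ => hq_nonneg _ _ _
        have hP : 0 ≤ ∏ n, p n (prefixOf y n) (y n) :=
          Finset.prod_nonneg fun n _ => hp_nonneg _ _ _
        have h2 : (1:ℝ) ≤ Real.exp (-((α - 1) * ∑ n, ε n (prefixOf y n))) *
            Real.exp ((α - 1) * εmax) := by
          rw [← Real.exp_add]
          have h3 : (0:ℝ) ≤ -((α - 1) * ∑ n, ε n (prefixOf y n)) + (α - 1) * εmax := by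
            nlinarith [hbudget y]
          calc (1:ℝ) = Real.exp 0 := Real.exp_zero.symm
            _ ≤ _ := Real.exp_le_exp.2 h3
        calc (∏ n, q n (prefixOf y n) (y n)) *
              ((∏ n, p n (prefixOf y n) (y n)) / ∏ n, q n (prefixOf y n) (y n)) ^ α
            = (∏ n, q n (prefixOf y n) (y n)) *
              ((∏ n, p n (prefixOf y n) (y n)) / ∏ n, q n (prefixOf y n) (y n)) ^ α * 1 := by ring
          _ ≤ (∏ n, q n (prefixOf y n) (y n)) *
              ((∏ n, p n (prefixOf y n) (y n)) / ∏ n, q n (prefixOf y n) (y n)) ^ α *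
              (Real.exp (-((α - 1) * ∑ n, ε n (prefixOf y n))) * Real.exp ((α - 1) * εmax)) := by
            apply mul_le_mul_of_nonneg_left h2
            exact mul_nonneg hQ (Real.rpow_nonneg (div_nonneg hP hQ) _)
          _ = _ := by ring
    _ = (∑ y : Fin K → Y,
        ((∏ n, q n (prefixOf y n) (y n)) *
          (((∏ n, p n (prefixOf y n) (y n)) / ∏ n, q n (prefixOf y n) (y n)) ^ α *
            Real.exp (-((α - 1) * ∑ n, ε n (prefixOf y n)))))) * Real.exp ((α - 1) * εmax) := by
        rw [Finset.sum_mul]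
    _ ≤ 1 * Real.exp ((α - 1) * εmax) :=
        mul_le_mul_of_nonneg_right h1 (Real.exp_nonneg _)
    _ = Real.exp ((α - 1) * εmax) := one_mul _
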